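/- Let X = Σ_{i=1}^r a_i a_iᵀ be an r-dimensional orthogonal projector in ℝ^{n×n}. Suppose M is a symmetric matrix satisfying ⟨M, X⟩ ≥ r and M ⪯ X + 0.9(Id − X). If B is an n×r real matrix with BᵀB = Id_r and ⟨M, BBᵀ⟩ = ⟨M, X⟩, then ⟨X, BBᵀ⟩ ≥ r, and consequently ‖X − BBᵀ‖_F² = 0, i.e., BBᵀ = X. -/

import Mathlib

open Matrix

/-- Matrix completion identifiability core argument: for a rank-`r` projector
`X = Σ aᵢaᵢᵀ` and a symmetric `M` with `⟨M,X⟩ ≥ r` and `M ⪯ X + 0.9(Id − X)`,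
any `B` with `BᵀB = Id` and `⟨M, BBᵀ⟩ = ⟨M, X⟩` satisfies `⟨X, BBᵀ⟩ ≥ r` and
`BBᵀ = X`. -/
theorem stmt_3 {n r : ℕ} (a : Fin r → (Fin n → ℝ))
    (ha : ∀ i j, a i ⬝ᵥ a j = if i = j then (1 : ℝ) else 0)
    (X M : Matrix (Fin n) (Fin n) ℝ)
    (hX : X = ∑ i, vecMulVec (a i) (a i))
    (hM : M.IsSymm)
    (hMX : (r : ℝ) ≤ (M * Xᵀ).trace)
    (hPSD : (X + (0.9 : ℝ) • ((1 : Matrix (Fin n) (Fin n) ℝ) - X) - M).PosSemidef)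
    (B : Matrix (Fin n) (Fin r) ℝ) (hB : Bᵀ * B = 1)
    (hMB : (M * (B * Bᵀ)ᵀ).trace = (M * Xᵀ).trace) :
    (r : ℝ) ≤ (X * (B * Bᵀ)ᵀ).trace ∧ B * Bᵀ = X := by
  set P : Matrix (Fin n) (Fin n) ℝ := B * Bᵀ with hP
  have hPt : Pᵀ = P := by simp [hP, Matrix.transpose_mul]
  have hXt : Xᵀ = X := by
    rw [hX, Matrix.transpose_sum]
    refine Finset.sum_congr rfl fun i _ => ?_
    ext k l
    simp [Matrix.vecMulVec_apply, mul_comm]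
  have trX : X.trace = (r : ℝ) := by
    rw [hX, Matrix.trace_sum]
    have : ∀ i : Fin r, (vecMulVec (a i) (a i)).trace = 1 := by
      intro i
      have := ha i i
      simp only [if_pos rfl] at this
      simpa [Matrix.trace, Matrix.diag, Matrix.vecMulVec_apply, dotProduct] using this
    simp [this]
  have hXX : X * X = X := by
    rw [hX, Finset.sum_mul_sum]
    have hmul : ∀ i j : Fin r, vecMulVec (a i) (a i) * vecMulVec (a j) (a j)
        = (a i ⬝ᵥ a j) • vecMulVec (a i) (a j) := by
      intro i j
      ext k l
      simp only [Matrix.mul_apply, Matrix.vecMulVec_apply, Matrix.smul_apply,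
        dotProduct, smul_eq_mul, Finset.mul_sum, Finset.sum_mul]
      refine Finset.sum_congr rfl fun m _ => by ring
    calc (∑ i, ∑ j, vecMulVec (a i) (a i) * vecMulVec (a j) (a j))
        = ∑ i, ∑ j, (if i = j then (1:ℝ) else 0) • vecMulVec (a i) (a j) := by
          refine Finset.sum_congr rfl fun i _ => Finset.sum_congr rfl fun j _ => ?_
          rw [hmul, ha]
      _ = ∑ i, vecMulVec (a i) (a i) := by
          refine Finset.sum_congr rfl fun i _ => ?_
          simp [ite_smul]
  have trP : P.trace = (r : ℝ) := by
    rw [hP, Matrix.trace_mul_comm, hB, Matrix.trace_one]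
    simp
  have hPP : P * P = P := by
    rw [hP]
    calc B * Bᵀ * (B * Bᵀ) = B * (Bᵀ * B) * Bᵀ := by
          simp only [Matrix.mul_assoc]
      _ = B * Bᵀ := by rw [hB, Matrix.mul_one]
  -- key positivity fact
  have key : ∀ Y : Matrix (Fin n) (Fin n) ℝ, Y.PosSemidef → 0 ≤ (Y * P).trace := by
    intro Y hY
    rw [hP, ← Matrix.mul_assoc, Matrix.trace_mul_comm, Matrix.trace]
    refine Finset.sum_nonneg fun j _ => ?_
    have h := hY.dotProduct_mulVec_nonneg (fun i => B i j)
    simpa [Matrix.diag, Matrix.mul_apply, dotProduct, Matrix.mulVec] using h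
  set t : ℝ := (X * P).trace with ht
  have trMP : (r : ℝ) ≤ (M * P).trace := by
    rw [← hPt]; rw [hMB]; exact hMX
  have hineq : 0 ≤ t + 0.9 * ((r : ℝ) - t) - (M * P).trace := by
    have h := key _ hPSD
    have expand : ((X + (0.9 : ℝ) • ((1 : Matrix (Fin n) (Fin n) ℝ) - X) - M) * P).trace
        = t + 0.9 * ((r : ℝ) - t) - (M * P).trace := by
      simp only [Matrix.sub_mul, Matrix.add_mul, Matrix.smul_mul, Matrix.one_mul,
        Matrix.trace_sub, Matrix.trace_add, Matrix.trace_smul, smul_eq_mul, trP, ht]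
      try ring
    linarith [expand ▸ h]
  have htr : (r : ℝ) ≤ t := by linarith
  have hfro : ((X - P)ᵀ * (X - P)).trace = 2 * (r : ℝ) - 2 * t := by
    have hsym : (X - P)ᵀ = X - P := by rw [Matrix.transpose_sub, hXt, hPt]
    rw [hsym, Matrix.sub_mul, Matrix.mul_sub, Matrix.mul_sub, hXX, hPP]
    have hPX : (P * X).trace = t := by rw [Matrix.trace_mul_comm, ht]
    simp only [Matrix.trace_sub, hPX, trX, trP, ht]
    ring
  have hnn : 0 ≤ ((X - P)ᵀ * (X - P)).trace := by
    have : ((X - P)ᵀ * (X - P)).trace = ∑ j, ∑ k, (X - P) k j ^ 2 := by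
      refine Finset.sum_congr rfl fun j _ => ?_
      simp only [Matrix.diag, Matrix.mul_apply, Matrix.transpose_apply, sq]
    rw [this]
    exact Finset.sum_nonneg fun j _ => Finset.sum_nonneg fun k _ => sq_nonneg _
  have hteq : t = (r : ℝ) := by linarith
  constructor
  · rw [hPt]; exact htr
  · have hzero : ((X - P)ᵀ * (X - P)).trace = 0 := by rw [hfro, hteq]; ring
    have hsq : ∑ j, ∑ k, (X - P) k j ^ 2 = 0 := by
      have : ((X - P)ᵀ * (X - P)).trace = ∑ j, ∑ k, (X - P) k j ^ 2 := by
        refine Finset.sum_congr rfl fun j _ => ?_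
        simp only [Matrix.diag, Matrix.mul_apply, Matrix.transpose_apply, sq]
      rw [← this, hzero]
    have hXP : X - P = 0 := by
      ext k j
      have h1 := (Finset.sum_eq_zero_iff_of_nonneg
        (fun j _ => Finset.sum_nonneg fun k _ => sq_nonneg ((X - P) k j))).mp hsq j
        (Finset.mem_univ j)
      have h2 := (Finset.sum_eq_zero_iff_of_nonneg
        (fun k _ => sq_nonneg ((X - P) k j))).mp h1 k (Finset.mem_univ k)
      simpa [pow_eq_zero_iff] using h2
    have := sub_eq_zero.mp hXP
    simp [← this]
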